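/- In a utility-target auction, if all bidders are winners under utility-target vector π and one bidder lowers her bid by ε (increasing her π_i to π_i + ε), then any subsequent utility-target vector π'' reachable by other bidders only raising their bids satisfies π'' ∈ C_ε, i.e., it is within ℓ∞-distance ε of some vector in the CEF set. -/

import Mathlib

/-- Effective quasi-truthful bid in a utility-target auction. -/
noncomputable def utBid {I O : Type*} (v : I → O → ℝ) (π : I → ℝ) (i : I) (o : O) : ℝ :=
  max (v i o - π i) 0

/-- The utility-target vector `π` is in the CEF set `C`: some outcome `w`
maximizing the total effective bid makes the induced bids cooperatively
envy-free. -/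
def InCEF {I O : Type*} [Fintype I] [Fintype O] (v : I → O → ℝ) (π : I → ℝ) : Prop :=
  ∃ w : O, (∀ o, ∑ i, utBid v π i o ≤ ∑ i, utBid v π i w) ∧
    ∀ o, ∑ i, max ((v i o - utBid v π i o) - (v i w - utBid v π i w)) 0
      ≤ ∑ i, (utBid v π i w - utBid v π i o)

/-- **After a lowering step from an all-winners state, raises keep bids within
`ε` of the CEF set.** If all bidders are winners under `π` (each receives her
requested utility at a total-bid-maximizing outcome `ob`), bidder `k` lowers
her bid by `ε` (so her utility-target becomes `π k + ε`), and subsequently the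
other bidders only raise their bids (weakly decrease their utility-targets),
then the resulting vector `π''` lies in `C_ε`: within `ℓ∞`-distance `ε` of some
vector in the CEF set. -/
theorem lower_then_raise_near_cef {I O : Type*} [Fintype I] [Fintype O] [DecidableEq I]
    (v : I → O → ℝ) (hv : ∀ i o, 0 ≤ v i o)
    (ε : ℝ) (hε : 0 < ε)
    (π : I → ℝ) (hπ : ∀ i, 0 ≤ π i)
    (ob : O)
    (hwin : ∀ o, ∑ i, utBid v π i o ≤ ∑ i, utBid v π i ob)
    (hall : ∀ i, v i ob - utBid v π i ob = π i)
    (k : I)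
    (π'' : I → ℝ) (hπ'' : ∀ i, 0 ≤ π'' i)
    (hk : π'' k = π k + ε)
    (hraise : ∀ j, j ≠ k → π'' j ≤ π j) :
    ∃ ρ : I → ℝ, InCEF v ρ ∧ ∀ i, |π'' i - ρ i| ≤ ε := by
  refine ⟨fun i => min (π'' i) (π i), ?_, ?_⟩
  · set ρ : I → ℝ := fun i => min (π'' i) (π i) with hρdef
    have hρπ : ∀ i, ρ i ≤ π i := fun i => min_le_right _ _
    have hρ0 : ∀ i, 0 ≤ ρ i := fun i => le_min (hπ'' i) (hπ i)
    have hvob : ∀ i, π i ≤ v i ob := by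
      intro i
      have h := hall i
      unfold utBid at h
      by_contra hlt
      push_neg at hlt
      rw [max_eq_right (by linarith)] at h
      linarith
    have hbid_ob : ∀ i, utBid v ρ i ob = v i ob - ρ i := by
      intro i; unfold utBid
      exact max_eq_left (by have := hvob i; have := hρπ i; linarith)
    have hbidπ_ob : ∀ i, utBid v π i ob = v i ob - π i := by
      intro i; unfold utBid; exact max_eq_left (by linarith [hvob i])
    have hle : ∀ o i, utBid v ρ i o ≤ utBid v π i o + (π i - ρ i) := by
      intro o i; unfold utBid
      have hc : (0:ℝ) ≤ π i - ρ i := by linarith [hρπ i]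
      apply max_le
      · have h : v i o - ρ i = (v i o - π i) + (π i - ρ i) := by ring
        rw [h]
        exact add_le_add_left (le_max_left _ _) _
      · exact add_nonneg (le_max_right _ _) hc
    have hmax : ∀ o, ∑ i, utBid v ρ i o ≤ ∑ i, utBid v ρ i ob := by
      intro o
      calc ∑ i, utBid v ρ i o ≤ ∑ i, (utBid v π i o + (π i - ρ i)) :=
            Finset.sum_le_sum fun i _ => hle o i
        _ = ∑ i, utBid v π i o + ∑ i, (π i - ρ i) := Finset.sum_add_distrib
        _ ≤ ∑ i, utBid v π i ob + ∑ i, (π i - ρ i) := add_le_add_left (hwin o) _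
        _ = ∑ i, utBid v ρ i ob := by
            rw [← Finset.sum_add_distrib]
            refine Finset.sum_congr rfl fun i _ => ?_
            rw [hbid_ob i, hbidπ_ob i]; ring
    refine ⟨ob, hmax, ?_⟩
    intro o
    have hL : ∑ i, max ((v i o - utBid v ρ i o) - (v i ob - utBid v ρ i ob)) 0 = 0 := by
      refine Finset.sum_eq_zero fun i _ => ?_
      rw [hbid_ob i]
      have hub : v i o - utBid v ρ i o ≤ ρ i := by
        unfold utBid
        rcases le_total (v i o - ρ i) 0 with h | h
        · rw [max_eq_right h]; linarith
        · rw [max_eq_left h]; linarith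
      exact max_eq_right (by linarith)
    rw [hL, Finset.sum_sub_distrib]
    linarith [hmax o]
  · intro i
    simp only
    by_cases h : i = k
    · subst h
      rw [hk, min_eq_right (by linarith)]
      simp [abs_of_nonneg hε.le]
    · rw [min_eq_left (hraise i h)]
      simpa using hε.le
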